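/- arXiv:2103.06835 — 6 statements merged into one kernel-verified Lean document; each statement's English description precedes it below -/
import Mathlib

section
/- If v, w ∈ ℝ³ with ‖v‖ > 1 and ‖w‖ > 1, and the segment from v to w is tangent to the unit sphere at a point τ, then τ = v + (ℓ_v² + ℓ_v·ℓ_w)/(ℓ_v+ℓ_w)² · (w − v), where ℓ_v = √(‖v‖²−1) and ℓ_w = √(‖w‖²−1). -/
theorem contact_point_formula (v w τ : EuclideanSpace ℝ (Fin 3))
    (hv : 1 < ‖v‖) (hw : 1 < ‖w‖)
    (hseg : τ ∈ segment ℝ v w) (hτ : ‖τ‖ = 1)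
    (horth : (inner ℝ (w - v) τ : ℝ) = 0) :
    τ = v + ((Real.sqrt (‖v‖ ^ 2 - 1) ^ 2
          + Real.sqrt (‖v‖ ^ 2 - 1) * Real.sqrt (‖w‖ ^ 2 - 1))
        / (Real.sqrt (‖v‖ ^ 2 - 1) + Real.sqrt (‖w‖ ^ 2 - 1)) ^ 2) • (w - v) := by
  obtain ⟨p, q, hp, hq, hpq, hτeq⟩ := hseg
  set a := Real.sqrt (‖v‖ ^ 2 - 1) with ha
  set b := Real.sqrt (‖w‖ ^ 2 - 1) with hb
  have ha2 : a ^ 2 = ‖v‖ ^ 2 - 1 := Real.sq_sqrt (by nlinarith)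
  have hb2 : b ^ 2 = ‖w‖ ^ 2 - 1 := Real.sq_sqrt (by nlinarith)
  have hapos : 0 < a := Real.sqrt_pos.mpr (by nlinarith)
  have hbpos : 0 < b := Real.sqrt_pos.mpr (by nlinarith)
  clear_value a b
  -- write τ = v + q • (w - v)
  have hτv : τ - v = q • (w - v) := by
    have : p = 1 - q := by linarith
    rw [← hτeq, this]; module
  have hwτ : w - τ = p • (w - v) := by
    have : q = 1 - p := by linarith
    rw [← hτeq, this]; module
  have horth' : (inner ℝ τ (w - v) : ℝ) = 0 := by
    rw [real_inner_comm]; exact horth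
  have htv : (inner ℝ τ v : ℝ) = 1 := by
    have := real_inner_smul_right τ (w - v) q
    rw [← hτv, inner_sub_right, horth', real_inner_self_eq_norm_sq, hτ] at this
    linarith
  have htw : (inner ℝ τ w : ℝ) = 1 := by
    have := real_inner_smul_right τ (w - v) p
    rw [← hwτ, inner_sub_right, horth', real_inner_self_eq_norm_sq, hτ] at this
    nlinarith [this]
  have htv' : (inner ℝ v τ : ℝ) = 1 := by rw [real_inner_comm]; exact htv
  have htw' : (inner ℝ w τ : ℝ) = 1 := by rw [real_inner_comm]; exact htw
  have h1 : ‖τ - v‖ ^ 2 = a ^ 2 := by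
    rw [norm_sub_sq_real, htv, hτ, ha2]; ring
  have h2 : ‖w - τ‖ ^ 2 = b ^ 2 := by
    rw [norm_sub_sq_real, htw', hτ, hb2]; ring
  have h1' : ‖τ - v‖ = a := by
    rw [← Real.sqrt_sq (norm_nonneg _), h1, Real.sqrt_sq hapos.le]
  have h2' : ‖w - τ‖ = b := by
    rw [← Real.sqrt_sq (norm_nonneg _), h2, Real.sqrt_sq hbpos.le]
  have hq1 : q * ‖w - v‖ = a := by
    rw [← h1', hτv, norm_smul, Real.norm_eq_abs, abs_of_nonneg hq]
  have hp1 : p * ‖w - v‖ = b := by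
    rw [← h2', hwτ, norm_smul, Real.norm_eq_abs, abs_of_nonneg hp]
  have hsum : ‖w - v‖ = a + b := by
    have : (p + q) * ‖w - v‖ = b + a := by rw [add_mul, hp1, hq1]
    rw [hpq, one_mul] at this; linarith
  have habpos : 0 < a + b := by linarith
  have hqval : q = (a ^ 2 + a * b) / (a + b) ^ 2 := by
    rw [hsum] at hq1
    rw [eq_div_iff (by positivity : ((a + b) ^ 2 : ℝ) ≠ 0)]
    calc q * (a + b) ^ 2 = (q * (a + b)) * (a + b) := by ring
      _ = a * (a + b) := by rw [hq1]
      _ = a ^ 2 + a * b := by ring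
  rw [← hqval, ← hτv]
  module
end

section
/- If v, w ∈ ℝ³ have rational coordinates, ‖v‖ > 1, ‖w‖ > 1, and the segment [v,w] is tangent to the unit sphere at τ, then τ has rational coordinates; moreover 2·ℓ_v·ℓ_w = ‖w−v‖² − ‖w‖² − ‖v‖² + 2 where ℓ_v = √(‖v‖²−1), ℓ_w = √(‖w‖²−1). -/
theorem contact_point_rational (v w τ : EuclideanSpace ℝ (Fin 3))
    (hvQ : ∀ i, ∃ q : ℚ, v i = q) (hwQ : ∀ i, ∃ q : ℚ, w i = q)
    (hv : 1 < ‖v‖) (hw : 1 < ‖w‖)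
    (hseg : τ ∈ segment ℝ v w) (hτ : ‖τ‖ = 1)
    (horth : (inner ℝ (w - v) τ : ℝ) = 0) :
    (∀ i, ∃ q : ℚ, τ i = q) ∧
    2 * Real.sqrt (‖v‖ ^ 2 - 1) * Real.sqrt (‖w‖ ^ 2 - 1)
      = ‖w - v‖ ^ 2 - ‖w‖ ^ 2 - ‖v‖ ^ 2 + 2 := by
  obtain ⟨s, t, hs, ht, hst, hτeq⟩ := hseg
  have hne : w ≠ v := by
    rintro rfl
    have : τ = w := by rw [← hτeq, ← add_smul, hst, one_smul]
    rw [this] at hτ; linarith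
  have hwv : (0:ℝ) < ‖w - v‖ := by
    rw [norm_pos_iff]; exact sub_ne_zero.mpr hne
  have hττ : (inner ℝ τ τ : ℝ) = 1 := by
    rw [real_inner_self_eq_norm_sq, hτ]; norm_num
  have hwτvτ : (inner ℝ w τ : ℝ) = inner ℝ v τ := by
    have := horth; rw [inner_sub_left] at this; linarith
  have hvτ : (inner ℝ v τ : ℝ) = 1 := by
    have h1 : (inner ℝ τ τ : ℝ) = inner ℝ v τ := by
      nth_rewrite 1 [← hτeq]
      rw [inner_add_left, real_inner_smul_left, real_inner_smul_left, hwτvτ,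
        ← add_mul, hst, one_mul]
    linarith [hττ, h1]
  have hwτ : (inner ℝ w τ : ℝ) = 1 := by rw [hwτvτ, hvτ]
  have hτv : (inner ℝ τ v : ℝ) = 1 := by rw [real_inner_comm]; exact hvτ
  have hτw : (inner ℝ τ w : ℝ) = 1 := by rw [real_inner_comm]; exact hwτ
  have hs' : s = 1 - t := by linarith
  have hvτ' : v - τ = t • (v - w) := by
    rw [← hτeq, hs']; module
  have hwτ' : w - τ = s • (w - v) := by
    rw [← hτeq, hs']; module
  -- norm computations
  have hA : ‖v‖ ^ 2 - 1 = t ^ 2 * ‖w - v‖ ^ 2 := by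
    have h1 : ‖v - τ‖ ^ 2 = ‖v‖ ^ 2 - 2 * inner ℝ v τ + ‖τ‖ ^ 2 :=
      norm_sub_sq_real v τ
    have h2 : ‖v - τ‖ = |t| * ‖v - w‖ := by rw [hvτ', norm_smul]; simp
    have h3 : ‖v - w‖ = ‖w - v‖ := norm_sub_rev v w
    rw [hvτ, hτ, h2, h3, mul_pow, sq_abs] at h1
    linarith
  have hB : ‖w‖ ^ 2 - 1 = s ^ 2 * ‖w - v‖ ^ 2 := by
    have h1 : ‖w - τ‖ ^ 2 = ‖w‖ ^ 2 - 2 * inner ℝ w τ + ‖τ‖ ^ 2 :=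
      norm_sub_sq_real w τ
    have h2 : ‖w - τ‖ = |s| * ‖w - v‖ := by rw [hwτ', norm_smul]; simp
    rw [hwτ, hτ, h2, mul_pow, sq_abs] at h1
    linarith
  -- sqrt computations
  have hsA : Real.sqrt (‖v‖ ^ 2 - 1) = t * ‖w - v‖ := by
    rw [hA, show t ^ 2 * ‖w - v‖ ^ 2 = (t * ‖w - v‖) ^ 2 by ring,
      Real.sqrt_sq (by positivity)]
  have hsB : Real.sqrt (‖w‖ ^ 2 - 1) = s * ‖w - v‖ := by
    rw [hB, show s ^ 2 * ‖w - v‖ ^ 2 = (s * ‖w - v‖) ^ 2 by ring,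
      Real.sqrt_sq (by positivity)]
  -- mixed term
  have hmix : (1 : ℝ) - inner ℝ v w = s * t * ‖w - v‖ ^ 2 := by
    have h1 : (inner ℝ (v - τ) (w - τ) : ℝ) = inner ℝ v w - 1 := by
      rw [inner_sub_left, inner_sub_right, inner_sub_right, hvτ, hττ, hτw]; ring
    have h2 : (inner ℝ (v - τ) (w - τ) : ℝ) = - (t * s * ‖w - v‖ ^ 2) := by
      rw [hvτ', hwτ', real_inner_smul_left, real_inner_smul_right,
        show v - w = -(w - v) from (neg_sub w v).symm, inner_neg_left,
        real_inner_self_eq_norm_sq]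
      ring
    rw [h1] at h2; linarith
  have hnormsq : ‖w - v‖ ^ 2 = ‖w‖ ^ 2 - 2 * inner ℝ w v + ‖v‖ ^ 2 :=
    norm_sub_sq_real w v
  constructor
  · -- rationality
    choose qv hqv using hvQ
    choose qw hqw using hwQ
    have innerQ : ∀ (x y : EuclideanSpace ℝ (Fin 3)) (qx qy : Fin 3 → ℚ),
        (∀ i, x i = qx i) → (∀ i, y i = qy i) →
        (inner ℝ x y : ℝ) = ((∑ i, qx i * qy i : ℚ) : ℝ) := by
      intro x y qx qy hx hy
      rw [PiLp.inner_apply]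
      push_cast
      refine Finset.sum_congr rfl fun i _ => ?_
      simp [RCLike.inner_apply, hx i, hy i, mul_comm]
    have hvv := innerQ v v qv qv hqv hqv
    have hvw := innerQ v w qv qw hqv hqw
    have hww := innerQ w w qw qw hqw hqw
    set Q1 : ℚ := ∑ i, qv i * qv i with hQ1
    set Q2 : ℚ := ∑ i, qv i * qw i with hQ2
    set Q3 : ℚ := ∑ i, qw i * qw i with hQ3
    have hD : ‖w - v‖ ^ 2 = ((Q3 - 2 * Q2 + Q1 : ℚ) : ℝ) := by
      have e1 : (inner ℝ w v : ℝ) = (Q2 : ℝ) := by rw [real_inner_comm]; exact hvw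
      have e2 : ‖w‖ ^ 2 = (Q3 : ℝ) := by rw [← real_inner_self_eq_norm_sq]; exact hww
      have e3 : ‖v‖ ^ 2 = (Q1 : ℝ) := by rw [← real_inner_self_eq_norm_sq]; exact hvv
      rw [hnormsq, e1, e2, e3]; push_cast; ring
    have hDne : ((Q3 - 2 * Q2 + Q1 : ℚ) : ℝ) ≠ 0 := by
      rw [← hD]; positivity
    have ht1 : (inner ℝ (v - τ) (v - w) : ℝ) = t * ‖v - w‖ ^ 2 := by
      rw [hvτ', real_inner_smul_left, real_inner_self_eq_norm_sq]
    have ht2 : (inner ℝ (v - τ) (v - w) : ℝ) = inner ℝ v v - inner ℝ v w := by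
      rw [inner_sub_left, inner_sub_right, inner_sub_right, hτv, hτw]; ring
    have hnrev : ‖v - w‖ = ‖w - v‖ := norm_sub_rev v w
    have e1 : t * ((Q3 - 2 * Q2 + Q1 : ℚ) : ℝ) = ((Q1 - Q2 : ℚ) : ℝ) := by
      rw [← hD, ← hnrev, ← ht1, ht2, hvv, hvw]; push_cast; ring
    have htval : t = (((Q1 - Q2) / (Q3 - 2 * Q2 + Q1) : ℚ) : ℝ) := by
      rw [Rat.cast_div, eq_div_iff hDne]; exact e1
    intro i
    refine ⟨(1 - (Q1 - Q2) / (Q3 - 2 * Q2 + Q1)) * qv i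
      + ((Q1 - Q2) / (Q3 - 2 * Q2 + Q1)) * qw i, ?_⟩
    have happ : τ i = s * v i + t * w i := by
      rw [← hτeq]; simp [PiLp.add_apply, PiLp.smul_apply]
    rw [happ, hqv i, hqw i, hs', htval]
    push_cast
    ring
  · have hcomm : (inner ℝ w v : ℝ) = inner ℝ v w := by rw [real_inner_comm]
    rw [hsA, hsB, hnormsq, hcomm]
    linear_combination (-2 : ℝ) * hmix
end

section
/- For an integer k ≥ 3, the field ℚ(cos(π/k), sin(π/k)) equals ℚ(cos(π/k)) if and only if k is even; in particular [ℚ(cos(π/k), sin(π/k)) : ℚ] equals φ(2k)/2 if k is even and φ(2k) if k is odd. -/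
open IntermediateField Polynomial Module

set_option maxHeartbeats 1000000
set_option synthInstance.maxHeartbeats 200000

noncomputable section

lemma aux_finrank_prim {n : ℕ} (hn : 0 < n) {μ : ℂ} (h : IsPrimitiveRoot μ n) :
    Module.finrank ℚ (IntermediateField.adjoin ℚ ({μ} : Set ℂ)) = Nat.totient n := by
  have hint : IsIntegral ℚ μ := ⟨X ^ n - 1, monic_X_pow_sub_C 1 hn.ne', by
    simp [h.pow_eq_one]⟩
  lift n to ℕ+ using hn
  haveI := h.adjoin_isCyclotomicExtension ℚ
  have hfin := IsCyclotomicExtension.finrank (K := ℚ) (n := n)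
    (Algebra.adjoin ℚ ({μ} : Set ℂ)) (Polynomial.cyclotomic.irreducible_rat n.pos)
  exact (LinearEquiv.finrank_eq (Subalgebra.equivOfEq _ _
    (IntermediateField.adjoin_simple_toSubalgebra_of_isAlgebraic hint.isAlgebraic)).toLinearEquiv).trans hfin

lemma aux_fd_of_le {K L : IntermediateField ℚ ℂ} (h : K ≤ L) [FiniteDimensional ℚ L] :
    FiniteDimensional ℚ K :=
  FiniteDimensional.of_injective ((IntermediateField.inclusion h).toLinearMap)
    (IntermediateField.inclusion h).injective

lemma aux_mono {K L : IntermediateField ℚ ℂ} (h : K ≤ L) [FiniteDimensional ℚ L] :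
    Module.finrank ℚ K ≤ Module.finrank ℚ L :=
  LinearMap.finrank_le_finrank_of_injective
    (f := (IntermediateField.inclusion h).toLinearMap) (IntermediateField.inclusion h).injective

lemma aux_quad (D : IntermediateField ℚ ℂ) [FiniteDimensional ℚ D] (x : ℂ)
    (p : Polynomial D) (hm : p.Monic) (hd : p.natDegree = 2) (hr : Polynomial.aeval x p = 0) :
    Module.finrank ℚ (IntermediateField.restrictScalars ℚ (IntermediateField.adjoin D {x})) =
      Module.finrank ℚ D * (minpoly D x).natDegree ∧ (minpoly D x).natDegree ≤ 2 := by
  have hint : IsIntegral D x := ⟨p, hm, hr⟩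
  have hdvd : minpoly D x ∣ p := minpoly.dvd _ _ hr
  have hle : (minpoly D x).natDegree ≤ 2 := hd ▸ Polynomial.natDegree_le_of_dvd hdvd hm.ne_zero
  haveI : FiniteDimensional D (IntermediateField.adjoin D {x}) :=
    IntermediateField.adjoin.finiteDimensional hint
  refine ⟨?_, hle⟩
  have hmul := Module.finrank_mul_finrank ℚ D (IntermediateField.adjoin D {x})
  rw [IntermediateField.adjoin.finrank hint] at hmul
  exact hmul.symm

lemma aux_quad_deg_two (D : IntermediateField ℚ ℂ) (x : ℂ)
    (p : Polynomial D) (hm : p.Monic) (hd : p.natDegree = 2) (hr : Polynomial.aeval x p = 0)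
    (hx : x ∉ D) : (minpoly D x).natDegree = 2 := by
  have hint : IsIntegral D x := ⟨p, hm, hr⟩
  have hdvd : minpoly D x ∣ p := minpoly.dvd _ _ hr
  have hle : (minpoly D x).natDegree ≤ 2 := hd ▸ Polynomial.natDegree_le_of_dvd hdvd hm.ne_zero
  have h2 : 2 ≤ (minpoly D x).natDegree := by
    rw [minpoly.two_le_natDegree_iff hint]
    rintro ⟨y, rfl⟩
    exact hx y.2
  omega

theorem adjoin_cos_sin_eq_adjoin_cos_iff_even (k : ℕ) (hk : 3 ≤ k) :
    (IntermediateField.adjoin ℚ {Real.cos (Real.pi / k), Real.sin (Real.pi / k)}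
        = IntermediateField.adjoin ℚ {Real.cos (Real.pi / k)} ↔ Even k) ∧
    (Even k → 2 * Module.finrank ℚ
        (IntermediateField.adjoin ℚ {Real.cos (Real.pi / k), Real.sin (Real.pi / k)})
      = Nat.totient (2 * k)) ∧
    (¬ Even k → Module.finrank ℚ
        (IntermediateField.adjoin ℚ {Real.cos (Real.pi / k), Real.sin (Real.pi / k)})
      = Nat.totient (2 * k)) := by
  have hkR : (0:ℝ) < (k:ℝ) := by exact_mod_cast (by omega : 0 < k)
  have hkC : (k:ℂ) ≠ 0 := by exact_mod_cast (by omega : k ≠ 0)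
  set c : ℝ := Real.cos (Real.pi / k) with hc
  set s : ℝ := Real.sin (Real.pi / k) with hs
  have hspos : 0 < s := by
    have hklt : Real.pi / k < Real.pi := by
      rw [div_lt_iff₀ hkR]
      nlinarith [Real.pi_pos, (show (3:ℝ) ≤ (k:ℝ) by exact_mod_cast hk)]
    exact Real.sin_pos_of_pos_of_lt_pi (by positivity) hklt
  set ζ : ℂ := Complex.exp (2 * Real.pi * Complex.I / ((2*k : ℕ) : ℂ)) with hζdef
  set w : ℂ := Complex.exp (2 * Real.pi * Complex.I / ((4*k : ℕ) : ℂ)) with hwdef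
  have hζprim : IsPrimitiveRoot ζ (2*k) := Complex.isPrimitiveRoot_exp _ (by omega)
  have hwprim : IsPrimitiveRoot w (4*k) := Complex.isPrimitiveRoot_exp _ (by omega)
  have hwne : w ≠ 0 := Complex.exp_ne_zero _
  have hζ_eq : ζ = (c:ℂ) + (s:ℂ) * Complex.I := by
    have harg : (2 * (Real.pi:ℂ) * Complex.I / ((2*k : ℕ) : ℂ))
        = ((Real.pi / k : ℝ) : ℂ) * Complex.I := by
      push_cast
      field_simp
    rw [hζdef, harg, Complex.exp_mul_I, hc, hs]
    push_cast [Complex.ofReal_cos, Complex.ofReal_sin]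
    ring
  have hw2 : w ^ 2 = ζ := by
    rw [hwdef, hζdef, ← Complex.exp_nat_mul]
    congr 1
    push_cast
    field_simp
    ring
  have hwk : w ^ k = Complex.I := by
    rw [hwdef, ← Complex.exp_nat_mul]
    have harg : (k:ℂ) * (2 * Real.pi * Complex.I / ((4*k : ℕ) : ℂ))
        = ((Real.pi / 2 : ℝ) : ℂ) * Complex.I := by
      push_cast
      field_simp
      ring
    rw [harg, Complex.exp_mul_I]
    rw [← Complex.ofReal_cos, ← Complex.ofReal_sin]
    simp
  have hcs : ((s:ℂ))^2 + ((c:ℂ))^2 = 1 := by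
    have := Real.sin_sq_add_cos_sq (Real.pi / k)
    rw [← hc, ← hs] at this
    exact_mod_cast congrArg (fun x : ℝ => (x:ℂ)) this
  have hζinv : ζ⁻¹ = (c:ℂ) - (s:ℂ) * Complex.I := by
    refine inv_eq_of_mul_eq_one_right ?_
    rw [hζ_eq]
    linear_combination hcs - (s:ℂ)^2 * Complex.I_sq
  have hc_eq : (c:ℂ) = (ζ + ζ⁻¹)/2 := by rw [hζinv, hζ_eq]; ring
  have hsI_eq : (s:ℂ) = (ζ - ζ⁻¹) * (2*Complex.I)⁻¹ := by
    rw [hζinv, hζ_eq]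
    field_simp
    ring
  -- membership of c and s in any field containing ζ and I
  have hmem : ∀ K : IntermediateField ℚ ℂ, ζ ∈ K → Complex.I ∈ K →
      (c:ℂ) ∈ K ∧ (s:ℂ) ∈ K := by
    intro K hζK hIK
    have h2 : (2:ℂ) ∈ K := by simpa using K.algebraMap_mem (2:ℚ)
    constructor
    · rw [hc_eq]; exact div_mem (add_mem hζK (inv_mem hζK)) h2
    · rw [hsI_eq]; exact mul_mem (sub_mem hζK (inv_mem hζK)) (inv_mem (mul_mem h2 hIK))
  obtain ⟨D, hD⟩ : ∃ X, X = IntermediateField.adjoin ℚ {(c:ℂ)} := ⟨_, rfl⟩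
  obtain ⟨Fc, hFc⟩ : ∃ X, X = IntermediateField.adjoin ℚ {(c:ℂ), (s:ℂ)} := ⟨_, rfl⟩
  obtain ⟨Kζ, hKζdef⟩ : ∃ X, X = IntermediateField.adjoin ℚ {ζ} := ⟨_, rfl⟩
  obtain ⟨Lw, hLwdef⟩ : ∃ X, X = IntermediateField.adjoin ℚ {w} := ⟨_, rfl⟩
  have hwmemLw : w ∈ Lw := hLwdef ▸ IntermediateField.subset_adjoin _ _ rfl
  have hζLw : ζ ∈ Lw := by rw [← hw2]; exact pow_mem hwmemLw 2
  have hILw : Complex.I ∈ Lw := by rw [← hwk]; exact pow_mem hwmemLw k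
  have hwint : IsIntegral ℚ w := ⟨X ^ (4*k) - 1, monic_X_pow_sub_C 1 (by omega), by
    simp [hwprim.pow_eq_one]⟩
  haveI : FiniteDimensional ℚ Lw := hLwdef ▸ IntermediateField.adjoin.finiteDimensional hwint
  have hfinLw : Module.finrank ℚ Lw = Nat.totient (4*k) := hLwdef ▸ aux_finrank_prim (by omega) hwprim
  have hfinKζ : Module.finrank ℚ Kζ = Nat.totient (2*k) := hKζdef ▸ aux_finrank_prim (by omega) hζprim
  have hζmemKζ : ζ ∈ Kζ := hKζdef ▸ IntermediateField.subset_adjoin _ _ rfl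
  obtain ⟨hcLw, hsLw⟩ := hmem Lw hζLw hILw
  have hFcLw : Fc ≤ Lw := by
    rw [hFc, adjoin_le_iff]
    intro x hx
    simp only [Set.mem_insert_iff, Set.mem_singleton_iff] at hx
    rcases hx with rfl | rfl <;> assumption
  have hDFc : D ≤ Fc := by rw [hD, hFc]; exact IntermediateField.adjoin.mono _ _ _ (by simp)
  have hKζLw : Kζ ≤ Lw := by
    rw [hKζdef, adjoin_le_iff]; exact Set.singleton_subset_iff.mpr hζLw
  haveI : FiniteDimensional ℚ Fc := aux_fd_of_le hFcLw
  haveI : FiniteDimensional ℚ D := aux_fd_of_le (hDFc.trans hFcLw)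
  haveI : FiniteDimensional ℚ Kζ := aux_fd_of_le hKζLw
  -- transfer from ℝ to ℂ
  obtain ⟨ι, hι⟩ : ∃ X : ℝ →ₐ[ℚ] ℂ, X = IsScalarTower.toAlgHom ℚ ℝ ℂ := ⟨_, rfl⟩
  obtain ⟨Fr, hFr⟩ : ∃ X, X = IntermediateField.adjoin ℚ {c, s} := ⟨_, rfl⟩
  obtain ⟨Dr, hDr⟩ : ∃ X, X = IntermediateField.adjoin ℚ {c} := ⟨_, rfl⟩
  rw [← hFr, ← hDr]
  have hιapply : ∀ x : ℝ, ι x = (x : ℂ) := fun x => by rw [hι]; rfl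
  have hmapF : Fr.map ι = Fc := by
    rw [hFr, IntermediateField.adjoin_map, hFc]
    congr 1
    simp [Set.image_insert_eq, hιapply]
  have hmapD : Dr.map ι = D := by
    rw [hDr, IntermediateField.adjoin_map, hD]
    congr 1
    simp [hιapply]
  have hrankF : Module.finrank ℚ Fr = Module.finrank ℚ Fc := by
    rw [← hmapF]
    exact (IntermediateField.equivMap Fr ι).toLinearEquiv.finrank_eq
  have hrankD : Module.finrank ℚ Dr = Module.finrank ℚ D := by
    rw [← hmapD]
    exact (IntermediateField.equivMap Dr ι).toLinearEquiv.finrank_eq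
  have hFcim : ∀ x ∈ Fc, Complex.im x = 0 := by
    intro x hx
    rw [← hmapF, ← SetLike.mem_coe, IntermediateField.coe_map] at hx
    obtain ⟨y, _, rfl⟩ := hx
    simp [hιapply]
  have hDim : ∀ x ∈ D, Complex.im x = 0 := by
    intro x hx
    rw [← hmapD, ← SetLike.mem_coe, IntermediateField.coe_map] at hx
    obtain ⟨y, _, rfl⟩ := hx
    simp [hιapply]
  have hInotF : Complex.I ∉ Fc := fun h => by simpa using hFcim _ h
  -- the field L3 = ℚ(c,s,I)
  obtain ⟨L3, hL3⟩ : ∃ X, X = IntermediateField.adjoin ℚ {(c:ℂ), (s:ℂ), Complex.I} := ⟨_, rfl⟩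
  have hL3eq : L3 = IntermediateField.restrictScalars ℚ
      (IntermediateField.adjoin Fc {Complex.I}) := by
    erw [hL3, hFc, IntermediateField.adjoin_adjoin_left]
    congr 1
    rw [Set.union_singleton]
    ext x
    simp only [Set.mem_insert_iff, Set.mem_singleton_iff]
    tauto
  have hImonic : (X ^ 2 + C (1 : Fc)).Monic := monic_X_pow_add_C _ (by norm_num)
  have hIdeg : (X ^ 2 + C (1 : Fc)).natDegree = 2 := natDegree_X_pow_add_C
  have hIroot : Polynomial.aeval Complex.I (X ^ 2 + C (1 : Fc)) = 0 := by
    simp [Complex.I_sq]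
  have hquadI := aux_quad Fc Complex.I _ hImonic hIdeg hIroot
  have hdegI : (minpoly Fc Complex.I).natDegree = 2 :=
    aux_quad_deg_two Fc Complex.I _ hImonic hIdeg hIroot hInotF
  have hL3rank : Module.finrank ℚ L3 = 2 * Module.finrank ℚ Fc := by
    rw [hL3eq, hquadI.1, hdegI]
    ring
  -- L3 = ℚ(ζ, I)
  obtain ⟨KζI, hKζI⟩ : ∃ X, X = IntermediateField.adjoin ℚ {ζ, Complex.I} := ⟨_, rfl⟩
  have hζKI : ζ ∈ KζI := hKζI ▸ IntermediateField.subset_adjoin _ _ (by simp)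
  have hIKI : Complex.I ∈ KζI := hKζI ▸ IntermediateField.subset_adjoin _ _ (by simp)
  have hL3KζI : L3 = KζI := by
    apply le_antisymm
    · rw [hL3, adjoin_le_iff]
      obtain ⟨h1, h2⟩ := hmem KζI hζKI hIKI
      intro x hx
      simp only [Set.mem_insert_iff, Set.mem_singleton_iff] at hx
      rcases hx with rfl | rfl | rfl <;> assumption
    · rw [hKζI, adjoin_le_iff]
      have hcm : (c:ℂ) ∈ L3 := hL3 ▸ IntermediateField.subset_adjoin _ _ (by simp)
      have hsm : (s:ℂ) ∈ L3 := hL3 ▸ IntermediateField.subset_adjoin _ _ (by simp)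
      have hIm' : Complex.I ∈ L3 := hL3 ▸ IntermediateField.subset_adjoin _ _ (by simp)
      have hζm : ζ ∈ L3 := by rw [hζ_eq]; exact add_mem hcm (mul_mem hsm hIm')
      intro x hx
      simp only [Set.mem_insert_iff, Set.mem_singleton_iff] at hx
      rcases hx with rfl | rfl <;> assumption
  -- even case : KζI = Kζ
  have hIKζ_even : Even k → KζI = Kζ := by
    intro he
    obtain ⟨m, hm⟩ := he
    have hIK : Complex.I ∈ Kζ := by
      have hpow : ζ ^ m = Complex.I := by
        rw [← hw2, ← pow_mul, ← hwk]
        congr 1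
        omega
      rw [← hpow]; exact pow_mem hζmemKζ m
    apply le_antisymm
    · rw [hKζI, adjoin_le_iff]
      intro x hx
      simp only [Set.mem_insert_iff, Set.mem_singleton_iff] at hx
      rcases hx with rfl | rfl <;> [exact hζmemKζ; exact hIK]
    · rw [hKζI, hKζdef]; exact IntermediateField.adjoin.mono _ _ _ (by simp)
  -- odd case : KζI = Lw
  have hKζI_odd : ¬ Even k → KζI = Lw := by
    intro hko
    obtain ⟨m, hm⟩ : Odd k := Nat.not_even_iff_odd.mp hko
    have hwKI : w ∈ KζI := by
      have hζz : ζ = w ^ (2:ℤ) := by exact_mod_cast hw2.symm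
      have hIz : Complex.I = w ^ (k:ℤ) := by exact_mod_cast hwk.symm
      have hcalc : ζ ^ (-(m:ℤ)) * Complex.I ^ (1:ℤ) = w := by
        rw [hζz, hIz, ← zpow_mul, ← zpow_mul, ← zpow_add₀ hwne]
        rw [show (2:ℤ) * (-(m:ℤ)) + (k:ℤ) * 1 = 1 by
          have : (k:ℤ) = 2*m + 1 := by exact_mod_cast hm
          omega]
        exact zpow_one w
      rw [← hcalc]
      exact mul_mem (zpow_mem hζKI _) (zpow_mem hIKI _)
    apply le_antisymm
    · rw [hKζI, adjoin_le_iff]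
      intro x hx
      simp only [Set.mem_insert_iff, Set.mem_singleton_iff] at hx
      rcases hx with rfl | rfl <;> [exact hζLw; exact hILw]
    · rw [hLwdef, adjoin_le_iff]
      exact Set.singleton_subset_iff.mpr hwKI
  -- totient identity for odd k
  have htot : ¬ Even k → Nat.totient (4*k) = 2 * Nat.totient (2*k) := by
    intro hko
    have hodd : ¬ (2 ∣ k) := by
      rw [Nat.even_iff] at hko; omega
    have h2k : Nat.Coprime 2 k := (Nat.prime_two.coprime_iff_not_dvd).mpr hodd
    have h4k : Nat.Coprime 4 k := by
      have h := Nat.Coprime.pow_left 2 h2k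
      norm_num at h
      exact h
    rw [Nat.totient_mul h4k, Nat.totient_mul h2k,
      (by decide : Nat.totient 4 = 2), (by decide : Nat.totient 2 = 1)]
    ring
  -- main rank facts
  have hEvenRank : Even k → 2 * Module.finrank ℚ Fc = Nat.totient (2*k) := by
    intro he
    rw [← hL3rank, hL3KζI, hIKζ_even he, hfinKζ]
  have hOddRank : ¬ Even k → Module.finrank ℚ Fc = Nat.totient (2*k) := by
    intro ho
    have h1 : 2 * Module.finrank ℚ Fc = 2 * Nat.totient (2*k) := by
      rw [← hL3rank, hL3KζI, hKζI_odd ho, hfinLw, htot ho]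
    omega
  -- c ∈ Kζ
  have hcKζ : (c:ℂ) ∈ Kζ := by
    have h2 : (2:ℂ) ∈ Kζ := by simpa using Kζ.algebraMap_mem (2:ℚ)
    rw [hc_eq]; exact div_mem (add_mem hζmemKζ (inv_mem hζmemKζ)) h2
  have hζim : Complex.im ζ = s := by rw [hζ_eq]; simp
  -- the iff
  have hiff : Fr = Dr ↔ Even k := by
    constructor
    · intro heq
      by_contra hko
      have h1 : Module.finrank ℚ D = Nat.totient (2*k) := by
        rw [← hrankD, ← heq, hrankF]
        exact hOddRank hko
      have hDKζ : D ≤ Kζ := by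
        rw [hD, adjoin_le_iff]
        exact Set.singleton_subset_iff.mpr hcKζ
      have hDeq : D = Kζ := IntermediateField.eq_of_le_of_finrank_eq hDKζ (by rw [h1, hfinKζ])
      have hζD : ζ ∈ D := hDeq ▸ hζmemKζ
      have : Complex.im ζ = 0 := hDim _ hζD
      rw [hζim] at this
      exact hspos.ne' this
    · intro he
      have h2eq : 2 * Module.finrank ℚ Fc = Nat.totient (2*k) := hEvenRank he
      -- lower bound for D
      have hcD : (c:ℂ) ∈ D := hD ▸ IntermediateField.subset_adjoin _ _ rfl
      have h2D : (2:ℂ) ∈ D := by simpa using D.algebraMap_mem (2:ℚ)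
      obtain ⟨a, ha⟩ : ∃ a : D, (algebraMap D ℂ) a = -(2*(c:ℂ)) :=
        ⟨⟨-(2*(c:ℂ)), neg_mem (mul_mem h2D hcD)⟩, rfl⟩
      have hqm : (X ^ 2 + (C a * X + C (1:D))).Monic := by
        apply monic_X_pow_add
        apply lt_of_le_of_lt (Polynomial.degree_add_le _ _)
        simp only [max_lt_iff]
        constructor
        · refine lt_of_le_of_lt (Polynomial.degree_mul_le _ _) ?_
          refine lt_of_le_of_lt (add_le_add Polynomial.degree_C_le Polynomial.degree_X_le) ?_
          norm_num
        · exact lt_of_le_of_lt Polynomial.degree_C_le (by norm_num)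
      have hqd : (X ^ 2 + (C a * X + C (1:D))).natDegree = 2 := by
        compute_degree!
      have hqr : Polynomial.aeval ζ (X ^ 2 + (C a * X + C (1:D))) = 0 := by
        simp only [map_add, map_mul, map_pow, aeval_X, aeval_C]
        rw [ha, map_one, hζ_eq]
        linear_combination (-1 : ℂ) * hcs + (s:ℂ)^2 * Complex.I_sq
      have hquadζ := aux_quad D ζ _ hqm hqd hqr
      haveI : FiniteDimensional D (IntermediateField.adjoin D {ζ}) :=
        IntermediateField.adjoin.finiteDimensional ⟨_, hqm, hqr⟩
      haveI : FiniteDimensional ℚ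
          (IntermediateField.restrictScalars ℚ (IntermediateField.adjoin D {ζ})) :=
        FiniteDimensional.trans ℚ D (IntermediateField.adjoin D {ζ})
      have hKζle : Kζ ≤ IntermediateField.restrictScalars ℚ (IntermediateField.adjoin D {ζ}) := by
        rw [hKζdef, adjoin_le_iff]
        exact Set.singleton_subset_iff.mpr ((IntermediateField.mem_restrictScalars ℚ).mpr
          (IntermediateField.subset_adjoin _ _ rfl))
      have hlow : Nat.totient (2*k) ≤ 2 * Module.finrank ℚ D := by
        calc Nat.totient (2*k) = Module.finrank ℚ Kζ := hfinKζ.symm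
          _ ≤ Module.finrank ℚ
              (IntermediateField.restrictScalars ℚ (IntermediateField.adjoin D {ζ})) :=
            aux_mono hKζle
          _ = Module.finrank ℚ D * (minpoly D ζ).natDegree := hquadζ.1
          _ ≤ Module.finrank ℚ D * 2 := Nat.mul_le_mul_left _ hquadζ.2
          _ = 2 * Module.finrank ℚ D := by ring
      have hDF : Module.finrank ℚ D = Module.finrank ℚ Fc :=
        le_antisymm (aux_mono hDFc) (by omega)
      have hDeq : D = Fc := IntermediateField.eq_of_le_of_finrank_eq hDFc hDF
      apply IntermediateField.map_injective ι
      rw [hmapF, hmapD, hDeq]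
    -- pull back
  refine ⟨hiff, fun he => by rw [hrankF]; exact hEvenRank he,
    fun ho => by rw [hrankF]; exact hOddRank ho⟩
end
end

section
/- For k ≥ 3, the 2(k+1) points (cos(2jπ/k)/cos(π/k), sin(2jπ/k)/cos(π/k), 0) for j = 1,…,k, together with (0, 0, ±1/sin(π/k)), are the vertices of a bipyramid over a k-gon all of whose edges are tangent to the unit sphere, with the sum of all contact points equal to zero. -/
open Set Real

lemma sum_cos_arith (k : ℕ) (hk : 3 ≤ k) (a : ℝ) :
    ∑ j ∈ Finset.range k, cos (a + j * (2 * π / k)) = 0 := by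
  have hk0 : (k : ℝ) ≠ 0 := by positivity
  have hs : sin (π / k) ≠ 0 := by
    apply ne_of_gt
    apply Real.sin_pos_of_pos_of_lt_pi
    · positivity
    · rw [div_lt_iff₀ (by positivity)]
      have h3 : (3:ℝ) ≤ k := by exact_mod_cast hk
      nlinarith [Real.pi_pos]
  have key : (∑ j ∈ Finset.range k, cos (a + j * (2 * π / k))) * (2 * sin (π / k)) = 0 := by
    rw [Finset.sum_mul]
    have : ∀ j ∈ Finset.range k, cos (a + j * (2 * π / k)) * (2 * sin (π / k)) =
        sin (a + (j + 1 : ℕ) * (2 * π / k) - π / k) - sin (a + j * (2 * π / k) - π / k) := by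
      intro j _
      push_cast
      have h1 : a + (j + 1 : ℝ) * (2 * π / k) - π / k
          = (a + j * (2 * π / k)) + π / k := by field_simp; ring
      have h2 : a + (j : ℝ) * (2 * π / k) - π / k = (a + j * (2 * π / k)) - π / k := by ring
      rw [h1, h2, Real.sin_add, Real.sin_sub]; ring
    rw [Finset.sum_congr rfl this, Finset.sum_range_sub (fun j => sin (a + j * (2 * π / k) - π / k))]
    have : a + (k : ℝ) * (2 * π / k) - π / k = (a + (0:ℕ) * (2 * π / k) - π / k) + 2 * π := by
      field_simp; ring
    rw [this, Real.sin_add_two_pi]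
    simp
  have h2 : (2 : ℝ) * sin (π / k) ≠ 0 := by simpa using hs
  exact (mul_eq_zero.mp key).resolve_right h2

lemma sum_sin_arith (k : ℕ) (hk : 3 ≤ k) (a : ℝ) :
    ∑ j ∈ Finset.range k, sin (a + j * (2 * π / k)) = 0 := by
  have := sum_cos_arith k hk (a - π / 2)
  rw [← this]
  apply Finset.sum_congr rfl
  intro j _
  rw [show a - π/2 + j * (2*π/k) = (a + j * (2*π/k)) - π/2 by ring, Real.cos_sub_pi_div_two]

/-- The equatorial vertices of the bipyramid `B_k`. -/
noncomputable def bipyrEq (k : ℕ) (j : Fin k) : EuclideanSpace ℝ (Fin 3) :=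
  WithLp.toLp 2 ![cos (2 * (j.1 + 1) * π / k) / cos (π / k),
    sin (2 * (j.1 + 1) * π / k) / cos (π / k), 0]

/-- The two apexes of the bipyramid `B_k`. -/
noncomputable def bipyrApex (k : ℕ) (b : Bool) : EuclideanSpace ℝ (Fin 3) :=
  WithLp.toLp 2 ![0, 0, if b then 1 / sin (π / k) else -(1 / sin (π / k))]

/-- The segment `[v,w]` is tangent to the unit sphere at `τ`: `τ` is in the
relative interior of the segment, has norm one, and is orthogonal to the
direction of the segment. -/
def TangentAt (v w τ : EuclideanSpace ℝ (Fin 3)) : Prop :=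
  (∃ t ∈ Ioo (0 : ℝ) 1, τ = v + t • (w - v)) ∧ ‖τ‖ = 1 ∧ (inner ℝ (w - v) τ : ℝ) = 0

lemma euclid3_ext (x y : EuclideanSpace ℝ (Fin 3))
    (h0 : x 0 = y 0) (h1 : x 1 = y 1) (h2 : x 2 = y 2) : x = y := by
  ext i; fin_cases i <;> assumption

lemma vec_apply0 (a b c : ℝ) : (![a,b,c] : Fin 3 → ℝ) 0 = a := rfl
lemma vec_apply1 (a b c : ℝ) : (![a,b,c] : Fin 3 → ℝ) 1 = b := rfl
lemma vec_apply2 (a b c : ℝ) : (![a,b,c] : Fin 3 → ℝ) 2 = c := rfl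

lemma comb_apply (v w : EuclideanSpace ℝ (Fin 3)) (t : ℝ) (i : Fin 3) :
    (v + t • (w - v)) i = v i + t * (w i - v i) := rfl

lemma inner3 (x y : EuclideanSpace ℝ (Fin 3)) :
    (inner ℝ x y : ℝ) = x 0 * y 0 + x 1 * y 1 + x 2 * y 2 := by
  simp [PiLp.inner_apply, RCLike.inner_apply, Fin.sum_univ_three]; ring

lemma sub_apply3 (x y : EuclideanSpace ℝ (Fin 3)) (i : Fin 3) : (x - y) i = x i - y i := rfl

lemma norm3_eq_one (x : EuclideanSpace ℝ (Fin 3)) (h : x 0 ^2 + x 1 ^2 + x 2 ^2 = 1) :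
    ‖x‖ = 1 := by
  rw [EuclideanSpace.norm_eq]
  simp only [Real.norm_eq_abs, sq_abs, Fin.sum_univ_three]
  rw [h, Real.sqrt_one]

lemma esum_apply {n : Type*} [Fintype n] (f : n → EuclideanSpace ℝ (Fin 3)) (i : Fin 3) :
    (∑ j, f j) i = ∑ j, f j i := by rw [WithLp.ofLp_sum]; exact Finset.sum_apply i _ _

lemma bipyrEq_succ (k : ℕ) (hk : 3 ≤ k) (j : Fin k) :
    bipyrEq k (j + ⟨1, by linarith⟩) =
      WithLp.toLp 2 ![cos (2 * ((j.1:ℝ) + 2) * π / k) / cos (π / k),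
        sin (2 * ((j.1:ℝ) + 2) * π / k) / cos (π / k), 0] := by
  have hk0 : (k : ℝ) ≠ 0 := by positivity
  have hval : (j + (⟨1, by omega⟩ : Fin k)).1 = (j.1 + 1) % k := by
    simp [Fin.add_def]
  unfold bipyrEq
  rw [hval]
  rcases Nat.lt_or_ge (j.1 + 1) k with h | h
  · rw [Nat.mod_eq_of_lt h]
    have e : 2 * (((j.1 + 1 : ℕ) : ℝ) + 1) * π / k = 2 * ((j.1:ℝ) + 2) * π / k := by
      push_cast; ring
    rw [e]
  · have hj' : j.1 + 1 = k := by omega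
    have hjr : (j.1 : ℝ) = (k : ℝ) - 1 := by
      have : ((j.1:ℝ) + 1) = (k : ℝ) := by exact_mod_cast congrArg (Nat.cast : ℕ → ℝ) hj'
      linarith
    rw [hj', Nat.mod_self]
    have e : 2 * ((j.1:ℝ) + 2) * π / k = 2 * (((0:ℕ):ℝ) + 1) * π / k + 2 * π := by
      rw [hjr]; field_simp; ring
    rw [e, Real.cos_add_two_pi, Real.sin_add_two_pi]

set_option maxHeartbeats 800000
theorem bipyramid_springborn_realization (k : ℕ) (hk : 3 ≤ k) :
    ∃ (τe : Fin k → EuclideanSpace ℝ (Fin 3))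
      (τa : Bool → Fin k → EuclideanSpace ℝ (Fin 3)),
      (∀ j : Fin k, TangentAt (bipyrEq k j) (bipyrEq k (j + ⟨1, by omega⟩)) (τe j)) ∧
      (∀ (b : Bool) (j : Fin k), TangentAt (bipyrApex k b) (bipyrEq k j) (τa b j)) ∧
      (∑ j : Fin k, τe j) + ∑ b : Bool, ∑ j : Fin k, τa b j = 0 := by
  have hk0 : (k : ℝ) ≠ 0 := by positivity
  have hk3 : (3:ℝ) ≤ k := by exact_mod_cast hk
  have hπ := Real.pi_pos
  have hπk0 : 0 < π / k := by positivity
  have hπk : π / k < π / 2 := by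
    rw [div_lt_div_iff₀ (by positivity) (by norm_num)]
    nlinarith
  have hc : 0 < cos (π / k) := Real.cos_pos_of_mem_Ioo ⟨by linarith, hπk⟩
  have hs : 0 < sin (π / k) := Real.sin_pos_of_pos_of_lt_pi hπk0 (by linarith)
  have hpyth := Real.sin_sq_add_cos_sq (π / k)
  refine ⟨fun j => WithLp.toLp 2 ![cos ((2 * j.1 + 3) * π / k), sin ((2 * j.1 + 3) * π / k), 0],
      fun b j => WithLp.toLp 2 ![cos (π / k) * cos (2 * (j.1 + 1) * π / k),
        cos (π / k) * sin (2 * (j.1 + 1) * π / k),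
        if b then sin (π / k) else -(sin (π / k))], ?_, ?_, ?_⟩
  · -- equatorial edges
    intro j
    rw [bipyrEq_succ k hk j]
    have e1 : 2 * ((j.1:ℝ) + 1) * π / k = (2 * j.1 + 3) * π / k - π / k := by
      field_simp; ring
    have e2 : 2 * ((j.1:ℝ) + 2) * π / k = (2 * j.1 + 3) * π / k + π / k := by
      field_simp; ring
    refine ⟨⟨1/2, by norm_num, ?_⟩, ?_, ?_⟩
    · refine euclid3_ext _ _ ?_ ?_ ?_ <;>
        rw [comb_apply] <;>
        simp only [bipyrEq, vec_apply0, vec_apply1, vec_apply2]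
      · rw [e1, e2]; simp only [Real.cos_sub, Real.cos_add]; field_simp; try ring
      · rw [e1, e2]; simp only [Real.sin_sub, Real.sin_add]; field_simp; try ring
      · norm_num
    · apply norm3_eq_one
      simp only [vec_apply0, vec_apply1, vec_apply2]
      nlinarith [Real.sin_sq_add_cos_sq ((2 * (j.1:ℝ) + 3) * π / k)]
    · rw [inner3]
      simp only [sub_apply3, bipyrEq, vec_apply0, vec_apply1, vec_apply2]
      rw [e1, e2]
      simp only [Real.cos_sub, Real.cos_add, Real.sin_sub, Real.sin_add]
      field_simp
      ring
  · -- apex edges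
    intro b j
    have hc2 : cos (π / k) ^ 2 < 1 := by nlinarith
    have hθ := Real.sin_sq_add_cos_sq (2 * ((j.1:ℝ) + 1) * π / k)
    refine ⟨⟨cos (π / k) ^ 2, ⟨by positivity, hc2⟩, ?_⟩, ?_, ?_⟩
    · refine euclid3_ext _ _ ?_ ?_ ?_
      · rw [comb_apply]; simp only [bipyrApex, bipyrEq, vec_apply0]
        field_simp; ring
      · rw [comb_apply]; simp only [bipyrApex, bipyrEq, vec_apply1]
        field_simp; ring
      · rw [comb_apply]; simp only [bipyrApex, bipyrEq, vec_apply2]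
        cases b
        · simp only [Bool.false_eq_true, if_false]
          field_simp; linear_combination -hpyth
        · simp only [if_true]
          field_simp; linear_combination hpyth
    · apply norm3_eq_one
      cases b <;>
        simp only [vec_apply0, vec_apply1, vec_apply2, Bool.false_eq_true, if_false, if_true] <;>
        linear_combination (cos (π/k))^2 * hθ + hpyth
    · rw [inner3]
      simp only [sub_apply3, bipyrApex, bipyrEq, vec_apply0, vec_apply1, vec_apply2]
      cases b
      · simp only [Bool.false_eq_true, if_false]
        field_simp; linear_combination hθ
      · simp only [if_true]
        field_simp; linear_combination hθ
  · -- sum is zero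
    have hsumc : ∀ (a : ℝ), ∑ j : Fin k, cos ((2 * j.1 + a) * π / k) = 0 := by
      intro a
      rw [Fin.sum_univ_eq_sum_range (fun j => cos ((2 * (j:ℝ) + a) * π / k))]
      rw [← sum_cos_arith k hk (a * π / k)]
      exact Finset.sum_congr rfl fun j _ => by congr 1; field_simp; ring
    have hsums : ∀ (a : ℝ), ∑ j : Fin k, sin ((2 * j.1 + a) * π / k) = 0 := by
      intro a
      rw [Fin.sum_univ_eq_sum_range (fun j => sin ((2 * (j:ℝ) + a) * π / k))]
      rw [← sum_sin_arith k hk (a * π / k)]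
      exact Finset.sum_congr rfl fun j _ => by congr 1; field_simp; ring
    refine euclid3_ext _ _ ?_ ?_ ?_ <;>
      simp only [PiLp.add_apply, esum_apply, PiLp.zero_apply,
        vec_apply0, vec_apply1, vec_apply2, Fintype.sum_bool]
    · have h1 : ∑ j : Fin k, cos (π/k) * cos (2 * ((j.1:ℝ) + 1) * π / k) = 0 := by
        have : ∀ j : Fin k, cos (π/k) * cos (2 * ((j.1:ℝ) + 1) * π / k)
            = cos (π/k) * cos ((2 * j.1 + 2) * π / k) := fun j => by
          rw [show 2 * ((j.1:ℝ) + 1) * π / k = (2 * j.1 + 2) * π / k by ring]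
        rw [Finset.sum_congr rfl fun j _ => this j, ← Finset.mul_sum, hsumc 2, mul_zero]
      rw [hsumc 3, h1]
      ring
    · have h1 : ∑ j : Fin k, cos (π/k) * sin (2 * ((j.1:ℝ) + 1) * π / k) = 0 := by
        have : ∀ j : Fin k, cos (π/k) * sin (2 * ((j.1:ℝ) + 1) * π / k)
            = cos (π/k) * sin ((2 * j.1 + 2) * π / k) := fun j => by
          rw [show 2 * ((j.1:ℝ) + 1) * π / k = (2 * j.1 + 2) * π / k by ring]
        rw [Finset.sum_congr rfl fun j _ => this j, ← Finset.mul_sum, hsums 2, mul_zero]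
      rw [hsums 3, h1]
      ring
    · simp
end

section
/- For k ≥ 5, let ζ = e^{2πi/k} and α = (ζ²−1)²/((ζ−1)(ζ³−1)). Then α is a real number and [ℚ(α) : ℚ] ≥ φ(k)/4. -/
open Complex Polynomial IntermediateField

set_option maxHeartbeats 1000000 in
set_option synthInstance.maxHeartbeats 400000 in
theorem cross_ratio_degree_lower_bound (k : ℕ) (hk : 5 ≤ k) :
    ((exp (2 * Real.pi * I / k) ^ 2 - 1) ^ 2 /
        ((exp (2 * Real.pi * I / k) - 1) * (exp (2 * Real.pi * I / k) ^ 3 - 1))).im = 0 ∧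
    Nat.totient k ≤ 4 * Module.finrank ℚ
      (IntermediateField.adjoin ℚ
        {(exp (2 * Real.pi * I / k) ^ 2 - 1) ^ 2 /
          ((exp (2 * Real.pi * I / k) - 1) * (exp (2 * Real.pi * I / k) ^ 3 - 1))}) := by
  have hk0 : k ≠ 0 := by omega
  set ζ : ℂ := exp (2 * Real.pi * I / k) with hζdef
  have hζ : IsPrimitiveRoot ζ k := Complex.isPrimitiveRoot_exp k hk0
  have hζ0 : ζ ≠ 0 := Complex.exp_ne_zero _
  have h1 : ζ - 1 ≠ 0 := sub_ne_zero.mpr (hζ.ne_one (by omega))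
  have h3 : ζ ^ 3 - 1 ≠ 0 := sub_ne_zero.mpr (hζ.pow_ne_one_of_pos_of_lt (by norm_num) (by omega))
  set α : ℂ := (ζ ^ 2 - 1) ^ 2 / ((ζ - 1) * (ζ ^ 3 - 1)) with hαdef
  have hconj : (starRingEnd ℂ) ζ = ζ⁻¹ := by
    rw [hζdef, ← Complex.exp_conj, ← Complex.exp_neg]
    congr 1
    simp [map_div₀, Complex.conj_I, map_ofNat]
    ring
  have h1' : ζ⁻¹ - 1 ≠ 0 := by
    rw [sub_ne_zero, Ne, inv_eq_one]; exact hζ.ne_one (by omega)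
  have h3' : (ζ⁻¹) ^ 3 - 1 ≠ 0 := by
    rw [sub_ne_zero, inv_pow, Ne, inv_eq_one]
    exact hζ.pow_ne_one_of_pos_of_lt (by norm_num) (by omega)
  have hreal : (starRingEnd ℂ) α = α := by
    rw [hαdef, map_div₀, map_pow, map_sub, map_mul, map_sub, map_sub, map_pow, map_pow, map_one,
      hconj, div_eq_div_iff (mul_ne_zero h1' h3') (mul_ne_zero h1 h3)]
    field_simp
    ring
  refine ⟨(Complex.conj_eq_iff_im.mp hreal), ?_⟩
  -- α ≠ 1
  have hα1 : α ≠ 1 := by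
    intro h
    rw [hαdef, div_eq_one_iff_eq (mul_ne_zero h1 h3)] at h
    have hz : ζ * (ζ - 1) ^ 2 = 0 := by linear_combination h
    rcases mul_eq_zero.mp hz with h' | h'
    · exact hζ0 h'
    · exact h1 (pow_eq_zero_iff (by norm_num) |>.mp h')
  -- K and integrality
  set K : IntermediateField ℚ ℂ := IntermediateField.adjoin ℚ {α} with hKdef
  have hαK : α ∈ K := IntermediateField.subset_adjoin ℚ _ rfl
  have hζint : IsIntegral ℚ ζ := (hζ.isIntegral (by omega)).tower_top
  haveI hfinζ : FiniteDimensional ℚ ℚ⟮ζ⟯ := IntermediateField.adjoin.finiteDimensional hζint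
  have hζmem : ζ ∈ ℚ⟮ζ⟯ := IntermediateField.mem_adjoin_simple_self ℚ ζ
  have hαmem : α ∈ ℚ⟮ζ⟯ := by
    rw [hαdef]
    exact div_mem (pow_mem (sub_mem (pow_mem hζmem 2) (one_mem _)) 2)
      (mul_mem (sub_mem hζmem (one_mem _)) (sub_mem (pow_mem hζmem 3) (one_mem _)))
  have hαint : IsIntegral ℚ α := by
    have h' : IsIntegral ℚ (⟨α, hαmem⟩ : ℚ⟮ζ⟯) := IsIntegral.of_finite ℚ _
    exact IsIntegral.map (IsScalarTower.toAlgHom ℚ ℚ⟮ζ⟯ ℂ) h'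
  haveI hfinK : FiniteDimensional ℚ K := IntermediateField.adjoin.finiteDimensional hαint
  -- ζ has degree ≤ 4 over K
  set a : K := ⟨α, hαK⟩ with hadef
  have ha1 : (1 : K) - a ≠ 0 := by
    intro h
    apply hα1
    have h2 : (1 : ℂ) - α = 0 := by
      have := congrArg (algebraMap K ℂ) h
      simpa using this
    linear_combination -h2
  set p : Polynomial K := C (1 - a) * X ^ 4 + C a * X ^ 3 - C 2 * X ^ 2 + C a * X + C (1 - a)
    with hpdef
  have hpdeg4 : p.natDegree = 4 := by
    rw [hpdef]
    compute_degree!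
  have hp0 : p ≠ 0 := by
    intro h
    rw [h] at hpdeg4
    simp at hpdeg4
  have haeval : aeval ζ p = 0 := by
    have halg : (algebraMap K ℂ) a = α := rfl
    rw [hpdef]
    simp only [map_add, map_sub, map_mul, map_pow, aeval_C, aeval_X, map_one, map_sub, halg,
      map_ofNat]
    rw [hαdef]
    field_simp
    ring
  have hζKint : IsIntegral K ζ := (IsAlgebraic.isIntegral ⟨p, hp0, haeval⟩)
  haveI hfinE : FiniteDimensional K K⟮ζ⟯ := IntermediateField.adjoin.finiteDimensional hζKint
  have hdeg : Module.finrank K K⟮ζ⟯ ≤ 4 := by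
    rw [IntermediateField.adjoin.finrank hζKint]
    calc (minpoly K ζ).natDegree ≤ p.natDegree :=
          Polynomial.natDegree_le_natDegree (minpoly.degree_le_of_ne_zero K ζ hp0 haeval)
      _ = 4 := hpdeg4
  set L : IntermediateField ℚ ℂ := IntermediateField.restrictScalars ℚ K⟮ζ⟯ with hLdef
  have hζL : ζ ∈ L := IntermediateField.mem_adjoin_simple_self K ζ
  haveI hfinL : FiniteDimensional ℚ L := FiniteDimensional.trans ℚ K K⟮ζ⟯
  have hζL' : IsPrimitiveRoot (⟨ζ, hζL⟩ : L) k := by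
    apply IsPrimitiveRoot.of_map_of_injective (f := algebraMap L ℂ)
    · exact hζ
    · exact (algebraMap L ℂ).injective
  have htot : (Nat.lcm k k).totient ≤ Module.finrank ℚ L :=
    IsPrimitiveRoot.lcm_totient_le_finrank hζL' hζL'
      (by rw [Nat.lcm_self]; exact Polynomial.cyclotomic.irreducible_rat (by omega))
  rw [Nat.lcm_self] at htot
  have hmul : Module.finrank ℚ K * Module.finrank K K⟮ζ⟯ = Module.finrank ℚ L :=
    Module.finrank_mul_finrank ℚ K K⟮ζ⟯
  calc Nat.totient k ≤ Module.finrank ℚ L := htot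
    _ = Module.finrank ℚ K * Module.finrank K K⟮ζ⟯ := hmul.symm
    _ ≤ Module.finrank ℚ K * 4 := Nat.mul_le_mul_left _ hdeg
    _ = 4 * Module.finrank ℚ K := Nat.mul_comm _ _
end

section
/- Let v₁, v₂, v₃ ∈ ℚ³ be the vertices of a triangle whose three edges are tangent to the unit sphere, with tangent lengths ℓᵢ = √(‖vᵢ‖² − 1), and let r be the inradius of the triangle, so r² = 2/((1/ℓ₁ + 1/ℓ₂ + 1/ℓ₃)² − (1/ℓ₁² + 1/ℓ₂² + 1/ℓ₃²)). Then the quantity r·√(1−r²)·(ℓ₁+ℓ₂+ℓ₃) is a rational number. -/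
open Set

theorem inradius_tangent_lengths_rational
    (v : Fin 3 → EuclideanSpace ℝ (Fin 3))
    (hQ : ∀ i j, ∃ q : ℚ, v i j = q)
    (haff : AffineIndependent ℝ v)
    (hnorm : ∀ i, 1 < ‖v i‖)
    (htan : ∀ i j, i ≠ j → ∃ t ∈ Ioo (0 : ℝ) 1,
      ‖v i + t • (v j - v i)‖ = 1 ∧ (inner ℝ (v j - v i) (v i + t • (v j - v i)) : ℝ) = 0)
    (r : ℝ) (hr : 0 < r)
    (hr2 : r ^ 2 = 2 / ((∑ i, 1 / Real.sqrt (‖v i‖ ^ 2 - 1)) ^ 2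
        - ∑ i, 1 / (‖v i‖ ^ 2 - 1))) :
    ∃ q : ℚ, r * Real.sqrt (1 - r ^ 2) * (∑ i, Real.sqrt (‖v i‖ ^ 2 - 1)) = q := by
  classical
  choose w hw using hQ
  have ha : ∀ i, (0:ℝ) < ‖v i‖ ^ 2 - 1 := by
    intro i; nlinarith [hnorm i, norm_nonneg (v i)]
  have hpos : ∀ i, 0 < Real.sqrt (‖v i‖ ^ 2 - 1) :=
    fun i => Real.sqrt_pos.2 (ha i)
  have hsq : ∀ i, Real.sqrt (‖v i‖ ^ 2 - 1) ^ 2 = ‖v i‖ ^ 2 - 1 :=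
    fun i => Real.sq_sqrt (ha i).le
  -- tangency gives the inner products
  have hinner : ∀ i j, i ≠ j → (inner ℝ (v i) (v j) : ℝ)
      = 1 - Real.sqrt (‖v i‖ ^ 2 - 1) * Real.sqrt (‖v j‖ ^ 2 - 1) := by
    intro i j hij
    obtain ⟨t, ⟨ht0, ht1⟩, hq1, hq2⟩ := htan i j hij
    set q : EuclideanSpace ℝ (Fin 3) := v i + t • (v j - v i) with hqdef
    have hnq : ‖q‖ ^ 2 = 1 := by rw [hq1]; norm_num
    have hvi : v i = q - t • (v j - v i) := by rw [hqdef]; abel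
    have hvj : v j = q + (1 - t) • (v j - v i) := by
      rw [hqdef, sub_smul, one_smul]; abel
    have hiq : (inner ℝ (v i) q : ℝ) = 1 := by
      conv_lhs => rw [hvi]
      rw [inner_sub_left, real_inner_smul_left, hq2,
        real_inner_self_eq_norm_sq, hnq]
      ring
    have hjq : (inner ℝ (v j) q : ℝ) = 1 := by
      conv_lhs => rw [hvj]
      rw [inner_add_left, real_inner_smul_left, hq2,
        real_inner_self_eq_norm_sq, hnq]
      ring
    have hviu : (inner ℝ (v i) (v j - v i) : ℝ) = -(t * ‖v j - v i‖ ^ 2) := by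
      rw [real_inner_comm]
      nth_rewrite 2 [hvi]
      rw [inner_sub_right, hq2, real_inner_smul_right, real_inner_self_eq_norm_sq]
      ring
    have hdi : Real.sqrt (‖v i‖ ^ 2 - 1) = ‖v i - q‖ := by
      have h2 : ‖v i - q‖ ^ 2 = ‖v i‖ ^ 2 - 1 := by
        rw [norm_sub_sq_real, hiq, hnq]; ring
      rw [← h2, Real.sqrt_sq (norm_nonneg _)]
    have hdj : Real.sqrt (‖v j‖ ^ 2 - 1) = ‖v j - q‖ := by
      have h2 : ‖v j - q‖ ^ 2 = ‖v j‖ ^ 2 - 1 := by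
        rw [norm_sub_sq_real, hjq, hnq]; ring
      rw [← h2, Real.sqrt_sq (norm_nonneg _)]
    have hviq : ‖v i - q‖ = t * ‖v j - v i‖ := by
      have h3 : v i - q = -(t • (v j - v i)) := by rw [hqdef]; abel
      rw [h3, norm_neg, norm_smul, Real.norm_eq_abs, abs_of_pos ht0]
    have hvjq : ‖v j - q‖ = (1 - t) * ‖v j - v i‖ := by
      have h3 : v j - q = (1 - t) • (v j - v i) := by
        rw [hqdef, sub_smul, one_smul]; abel
      rw [h3, norm_smul, Real.norm_eq_abs, abs_of_pos (by linarith)]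
    have hij2 : (inner ℝ (v i) (v j) : ℝ) = 1 - t * (1 - t) * ‖v j - v i‖ ^ 2 := by
      conv_lhs => rw [hvj]
      rw [inner_add_right, real_inner_smul_right, hiq, hviu]
      ring
    rw [hij2, hdi, hdj, hviq, hvjq]; ring
  have hGd : ∀ i, (inner ℝ (v i) (v i) : ℝ) = Real.sqrt (‖v i‖ ^ 2 - 1) ^ 2 + 1 := by
    intro i; rw [real_inner_self_eq_norm_sq, hsq i]; ring
  -- the determinant
  set M : Matrix (Fin 3) (Fin 3) ℝ := Matrix.of (fun i j => (v i) j) with hM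
  have hMG : ∀ i j, (M * M.transpose) i j = (inner ℝ (v i) (v j) : ℝ) := by
    intro i j
    rw [Matrix.mul_apply]
    simp [hM, Matrix.transpose_apply, PiLp.inner_apply, RCLike.inner_apply,
      mul_comm]
  have hdet2 : (((Matrix.of w).det : ℚ) : ℝ) ^ 2 = (M * M.transpose).det := by
    rw [Matrix.det_mul, Matrix.det_transpose]
    have hMM : (Rat.castHom ℝ).mapMatrix (Matrix.of w) = M := by
      ext i j
      simp only [RingHom.mapMatrix_apply, Matrix.map_apply, Matrix.of_apply,
        Rat.coe_castHom, hM]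
      exact (hw i j).symm
    have h5 : (((Matrix.of w).det : ℚ) : ℝ) = M.det := by
      rw [show (((Matrix.of w).det : ℚ) : ℝ)
          = (Rat.castHom ℝ) ((Matrix.of w).det) from rfl, RingHom.map_det, hMM]
    rw [h5]; ring
  have hd2 : (((Matrix.of w).det : ℚ) : ℝ) ^ 2
      = 4 * ((Real.sqrt (‖v 0‖ ^ 2 - 1) * Real.sqrt (‖v 1‖ ^ 2 - 1) * Real.sqrt (‖v 2‖ ^ 2 - 1))
          * (Real.sqrt (‖v 0‖ ^ 2 - 1) + Real.sqrt (‖v 1‖ ^ 2 - 1) + Real.sqrt (‖v 2‖ ^ 2 - 1))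
        - (Real.sqrt (‖v 0‖ ^ 2 - 1) * Real.sqrt (‖v 1‖ ^ 2 - 1) * Real.sqrt (‖v 2‖ ^ 2 - 1)) ^ 2) := by
    rw [hdet2, Matrix.det_fin_three, hMG 0 0, hMG 0 1, hMG 0 2, hMG 1 0, hMG 1 1,
      hMG 1 2, hMG 2 0, hMG 2 1, hMG 2 2, hGd 0, hGd 1, hGd 2,
      hinner 0 1 (by decide), hinner 0 2 (by decide), hinner 1 0 (by decide),
      hinner 1 2 (by decide), hinner 2 0 (by decide), hinner 2 1 (by decide)]
    ring
  simp only [Fin.sum_univ_three] at hr2 ⊢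
  have hp0 := hpos 0; have hp1 := hpos 1; have hp2 := hpos 2
  have hs0 := hsq 0; have hs1 := hsq 1; have hs2 := hsq 2
  set l0 := Real.sqrt (‖v 0‖ ^ 2 - 1) with hl0
  set l1 := Real.sqrt (‖v 1‖ ^ 2 - 1) with hl1
  set l2 := Real.sqrt (‖v 2‖ ^ 2 - 1) with hl2
  rw [← hs0, ← hs1, ← hs2] at hr2
  have hl0' : l0 ≠ 0 := ne_of_gt hp0
  have hl1' : l1 ≠ 0 := ne_of_gt hp1
  have hl2' : l2 ≠ 0 := ne_of_gt hp2
  have hsne : l0 + l1 + l2 ≠ 0 := by positivity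
  have hD : (1 / l0 + 1 / l1 + 1 / l2) ^ 2 - (1 / l0 ^ 2 + 1 / l1 ^ 2 + 1 / l2 ^ 2)
      = 2 * (l0 + l1 + l2) / (l0 * l1 * l2) := by
    field_simp
    ring
  have hrr : r ^ 2 * (l0 + l1 + l2) = l0 * l1 * l2 := by
    rw [hr2, hD]
    field_simp
  by_cases hc : 1 - r ^ 2 ≤ 0
  · refine ⟨0, ?_⟩
    rw [Real.sqrt_eq_zero_of_nonpos hc]
    push_cast
    ring
  · push_neg at hc
    have hX2 : (r * Real.sqrt (1 - r ^ 2) * (l0 + l1 + l2)) ^ 2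
        = ((((Matrix.of w).det : ℚ) : ℝ) / 2) ^ 2 := by
      rw [mul_pow, mul_pow, Real.sq_sqrt hc.le, div_pow, hd2]
      linear_combination ((l0 + l1 + l2) - r ^ 2 * (l0 + l1 + l2) - l0 * l1 * l2) * hrr
    have hXnn : 0 ≤ r * Real.sqrt (1 - r ^ 2) * (l0 + l1 + l2) := by
      have := Real.sqrt_nonneg (1 - r ^ 2)
      positivity
    have hXeq : r * Real.sqrt (1 - r ^ 2) * (l0 + l1 + l2)
        = |(((Matrix.of w).det : ℚ) : ℝ) / 2| := by
      rw [← Real.sqrt_sq hXnn, hX2, Real.sqrt_sq_eq_abs]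
    refine ⟨|(Matrix.of w).det / 2|, ?_⟩
    rw [hXeq]
    push_cast
    ring
end
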